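/- Let μ be the standard Gaussian measure on ℝ^n and f : ℝ^n → ℝ be a bounded measurable function. Then the map h ↦ ∫ f(w + h) dμ(w) is real-analytic on ℝ^n. -/

import Mathlib

open MeasureTheory
open scoped Nat ENNReal NNReal

noncomputable section GaussianConvAux

namespace GaussianConvAux

variable {n : ℕ}

local notation "E" => EuclideanSpace ℝ (Fin n)

/-- `t^k/k! ≤ e^t` for nonnegative `t`. -/
lemma pow_div_factorial_le_exp {t : ℝ} (ht : 0 ≤ t) (k : ℕ) :
    t ^ k / k ! ≤ Real.exp t :=
  calc t ^ k / k ! ≤ ∑ i ∈ Finset.range (k + 1), t ^ i / i ! :=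
        Finset.single_le_sum (f := fun i => t ^ i / i !) (fun i _ => by positivity)
          (Finset.self_mem_range_succ k)
    _ ≤ Real.exp t := Real.sum_le_exp_of_nonneg ht _

lemma integrable_gauss4 (n : ℕ) :
    Integrable (fun x : EuclideanSpace ℝ (Fin n) => Real.exp (-‖x‖ ^ 2 / 4)) := by
  have h := (GaussianFourier.integrable_cexp_neg_mul_sq_norm_add
      (V := EuclideanSpace ℝ (Fin n)) (b := (1/4 : ℂ)) (by norm_num) 0 0).norm
  refine h.congr (Filter.Eventually.of_forall fun x => ?_)
  simp only [Complex.norm_exp]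
  congr 1
  simp [Complex.add_re, Complex.mul_re, Complex.ofReal_re, Complex.ofReal_im,
    ← Complex.ofReal_pow]
  ring

/-- The exponential series. -/
lemma tsum_pow_div_factorial (t : ℝ) : ∑' k : ℕ, t ^ k / k ! = Real.exp t := by
  rw [Real.exp_eq_exp_ℝ, NormedSpace.exp_eq_tsum_div]

lemma gauss_bound {C r t : ℝ} (hC : 0 ≤ C) (_ht : 0 ≤ t) :
    C * Real.exp (-t ^ 2 / 2) * Real.exp (r * t) ≤
      C * Real.exp (r ^ 2) * Real.exp (-t ^ 2 / 4) := by
  rw [mul_assoc, mul_assoc, ← Real.exp_add, ← Real.exp_add]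
  refine mul_le_mul_of_nonneg_left ?_ hC
  rw [Real.exp_le_exp]
  nlinarith [sq_nonneg (r - t / 2)]

lemma nonneg_of_bd {g : E → ℝ} {C : ℝ}
    (hbd : ∀ x, |g x| ≤ C * Real.exp (-‖x‖ ^ 2 / 2)) : 0 ≤ C := by
  have h0 := hbd 0
  have h1 : |g 0| ≤ C * 1 := by simpa using h0
  nlinarith [abs_nonneg (g 0)]

/-- Integrability of the `k`-th term. -/
lemma key_integrable (g : E → ℝ) (hg : Measurable g) (C : ℝ)
    (hbd : ∀ x, |g x| ≤ C * Real.exp (-‖x‖ ^ 2 / 2)) (r : ℝ) (hr : 0 ≤ r) (k : ℕ) :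
    Integrable (fun x : E => |g x| * (r * ‖x‖) ^ k / k !) := by
  have hC : 0 ≤ C := nonneg_of_bd hbd
  have hmaj : Integrable (fun x : E =>
      C * Real.exp (r ^ 2) * Real.exp (-‖x‖ ^ 2 / 4)) :=
    (integrable_gauss4 n).const_mul _
  refine hmaj.mono' ?_ (Filter.Eventually.of_forall fun x => ?_)
  · exact ((hg.abs.mul ((measurable_const.mul measurable_norm).pow_const k)).div_const
      _).aestronglyMeasurable
  · have h1 : (0:ℝ) ≤ |g x| * (r * ‖x‖) ^ k / k ! := by positivity
    rw [Real.norm_of_nonneg h1]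
    have h2 : (r * ‖x‖) ^ k / k ! ≤ Real.exp (r * ‖x‖) :=
      pow_div_factorial_le_exp (by positivity) k
    calc |g x| * (r * ‖x‖) ^ k / k ! = |g x| * ((r * ‖x‖) ^ k / k !) := by ring
    _ ≤ (C * Real.exp (-‖x‖ ^ 2 / 2)) * Real.exp (r * ‖x‖) := by
        apply mul_le_mul (hbd x) h2 (by positivity)
        positivity
    _ ≤ C * Real.exp (r ^ 2) * Real.exp (-‖x‖ ^ 2 / 4) :=
        gauss_bound hC (norm_nonneg x)

/-- Summability of the integrals of the terms. -/
lemma key_summable (g : E → ℝ) (hg : Measurable g) (C : ℝ)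
    (hbd : ∀ x, |g x| ≤ C * Real.exp (-‖x‖ ^ 2 / 2)) (r : ℝ) (hr : 0 ≤ r) :
    Summable (fun k : ℕ => ∫ x, |g x| * (r * ‖x‖) ^ k / k !) := by
  have hC : 0 ≤ C := nonneg_of_bd hbd
  set ψ : ℕ → E → ℝ≥0∞ :=
    fun k x => ENNReal.ofReal (|g x| * (r * ‖x‖) ^ k / k !) with hψ
  have hψm : ∀ k, Measurable (ψ k) := fun k =>
    ENNReal.measurable_ofReal.comp
      ((hg.abs.mul ((measurable_const.mul measurable_norm).pow_const k)).div_const _)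
  have hnonneg : ∀ (k : ℕ) (x : E), 0 ≤ |g x| * (r * ‖x‖) ^ k / k ! := by
    intro k x; positivity
  have hsum_pt : ∀ x : E, Summable (fun k : ℕ => |g x| * (r * ‖x‖) ^ k / k !) := by
    intro x
    have heq : (fun k : ℕ => |g x| * (r * ‖x‖) ^ k / k !) =
        fun k : ℕ => |g x| * ((r * ‖x‖) ^ k / k !) := by
      funext k; ring
    rw [heq]
    exact (Real.summable_pow_div_factorial (r * ‖x‖)).mul_left _
  have htsum_pt : ∀ x : E,
      ∑' k : ℕ, |g x| * (r * ‖x‖) ^ k / k ! = |g x| * Real.exp (r * ‖x‖) := by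
    intro x
    have heq : (fun k : ℕ => |g x| * (r * ‖x‖) ^ k / k !) =
        fun k : ℕ => |g x| * ((r * ‖x‖) ^ k / k !) := by
      funext k; ring
    rw [heq, tsum_mul_left, tsum_pow_div_factorial]
  have hS : ∑' k : ℕ, ∫⁻ x, ψ k x = ∫⁻ x, ENNReal.ofReal (|g x| * Real.exp (r * ‖x‖)) := by
    rw [← lintegral_tsum fun k => (hψm k).aemeasurable]
    refine lintegral_congr fun x => ?_
    simp only [hψ]
    rw [← ENNReal.ofReal_tsum_of_nonneg (fun k => hnonneg k x) (hsum_pt x), htsum_pt x]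
  have hSfin : ∑' k : ℕ, ∫⁻ x, ψ k x < ⊤ := by
    rw [hS]
    have hInt : Integrable (fun x : E =>
        C * Real.exp (r ^ 2) * Real.exp (-‖x‖ ^ 2 / 4)) :=
      (integrable_gauss4 n).const_mul _
    refine lt_of_le_of_lt (lintegral_mono fun x => ENNReal.ofReal_le_ofReal ?_)
      hInt.lintegral_lt_top
    calc |g x| * Real.exp (r * ‖x‖)
        ≤ (C * Real.exp (-‖x‖ ^ 2 / 2)) * Real.exp (r * ‖x‖) :=
          mul_le_mul_of_nonneg_right (hbd x) (Real.exp_nonneg _)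
      _ ≤ C * Real.exp (r ^ 2) * Real.exp (-‖x‖ ^ 2 / 4) := gauss_bound hC (norm_nonneg x)
  have hsummable : Summable (fun k : ℕ => (∫⁻ x, ψ k x).toReal) :=
    ENNReal.summable_toReal hSfin.ne
  refine hsummable.congr fun k => ?_
  rw [integral_eq_lintegral_of_nonneg_ae (Filter.Eventually.of_forall (hnonneg k))
    ((hg.abs.mul ((measurable_const.mul measurable_norm).pow_const k)).div_const
      _).aestronglyMeasurable]

/-- Key lemma: the "Laplace-transform" type integral is analytic everywhere. -/
lemma analyticOnNhd_integral_exp_inner (g : E → ℝ) (hg : Measurable g)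
    (C : ℝ) (hbd : ∀ x, |g x| ≤ C * Real.exp (-‖x‖ ^ 2 / 2)) :
    AnalyticOnNhd ℝ
      (fun h : E => ∫ x, g x * Real.exp ((inner ℝ x h : ℝ)))
      Set.univ := by
  classical
  set M : ∀ k : ℕ, E → ContinuousMultilinearMap ℝ (fun _ : Fin k => E) ℝ :=
    fun k x => (ContinuousMultilinearMap.mkPiAlgebra ℝ (Fin k) ℝ).compContinuousLinearMap
      (fun _ => innerSL ℝ x) with hM
  have hMapply : ∀ (k : ℕ) (x : E) (m : Fin k → E),
      M k x m = ∏ i, (inner ℝ x (m i) : ℝ) := by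
    intro k x m
    simp [hM]
  have hMnorm : ∀ (k : ℕ) (x : E), ‖M k x‖ ≤ ‖x‖ ^ k := by
    intro k x
    refine le_trans (ContinuousMultilinearMap.norm_compContinuousLinearMap_le _ _) ?_
    simp [ContinuousMultilinearMap.norm_mkPiAlgebra, innerSL_apply_norm]
  have hMcont : ∀ k : ℕ, Continuous fun x : E => M k x := by
    intro k
    have h1 : Continuous fun x : E => (fun _ : Fin k => innerSL ℝ x) :=
      continuous_pi fun _ => (innerSL ℝ).continuous
    have h2 := (ContinuousMultilinearMap.compContinuousLinearMapContinuousMultilinear ℝ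
        (fun _ : Fin k => E) (fun _ : Fin k => ℝ) ℝ).cont
    have h3 : Continuous fun A : (ContinuousMultilinearMap ℝ (fun _ : Fin k => ℝ) ℝ →L[ℝ]
        ContinuousMultilinearMap ℝ (fun _ : Fin k => E) ℝ) =>
        A (ContinuousMultilinearMap.mkPiAlgebra ℝ (Fin k) ℝ) :=
      (ContinuousLinearMap.apply ℝ _ (ContinuousMultilinearMap.mkPiAlgebra ℝ (Fin k) ℝ)).continuous
    have heq : (fun x : E => M k x) = fun x : E =>
        (ContinuousMultilinearMap.compContinuousLinearMapContinuousMultilinear ℝ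
          (fun _ : Fin k => E) (fun _ : Fin k => ℝ) ℝ (fun _ => innerSL ℝ x))
          (ContinuousMultilinearMap.mkPiAlgebra ℝ (Fin k) ℝ) := rfl
    rw [heq]
    exact h3.comp (h2.comp h1)
  have hIntAbs : ∀ k : ℕ, Integrable (fun x : E => |g x| * ‖x‖ ^ k) := by
    intro k
    have h := (key_integrable g hg C hbd 1 zero_le_one k).const_mul (k ! : ℝ)
    refine h.congr (Filter.Eventually.of_forall fun x => ?_)
    have hk : (k ! : ℝ) ≠ 0 := Nat.cast_ne_zero.mpr (Nat.factorial_ne_zero k)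
    simp only [one_mul]
    rw [mul_comm (k ! : ℝ), div_mul_cancel₀ _ hk]
  haveI : ∀ k : ℕ, SecondCountableTopologyEither E
      (ContinuousMultilinearMap ℝ (fun _ : Fin k => E) ℝ) := fun k => by
    apply secondCountableTopologyEither_of_left
  have hInt : ∀ k : ℕ, Integrable (fun x : E => g x • M k x) := by
    intro k
    refine (hIntAbs k).mono' ?_ (Filter.Eventually.of_forall fun x => ?_)
    · exact (hg.aestronglyMeasurable).smul (hMcont k).aestronglyMeasurable
    · show ‖g x • M k x‖ ≤ |g x| * ‖x‖ ^ k
      rw [norm_smul (g x) (M k x), Real.norm_eq_abs]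
      exact mul_le_mul_of_nonneg_left (hMnorm k x) (abs_nonneg _)
  set p : FormalMultilinearSeries ℝ E ℝ :=
    fun k => ((k ! : ℝ))⁻¹ • ∫ x, g x • M k x with hp
  have hpk_norm : ∀ k : ℕ, ‖p k‖ ≤ (k ! : ℝ)⁻¹ * ∫ x, |g x| * ‖x‖ ^ k := by
    intro k
    show ‖(k ! : ℝ)⁻¹ • ∫ x, g x • M k x‖ ≤ _
    rw [norm_smul ((k ! : ℝ))⁻¹ (∫ x, g x • M k x), Real.norm_eq_abs, abs_inv, Nat.abs_cast]
    refine mul_le_mul_of_nonneg_left ?_ (by positivity)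
    refine le_trans (norm_integral_le_integral_norm _) ?_
    refine integral_mono (hInt k).norm (hIntAbs k) fun x => ?_
    show ‖g x • M k x‖ ≤ |g x| * ‖x‖ ^ k
    rw [norm_smul (g x) (M k x), Real.norm_eq_abs]
    exact mul_le_mul_of_nonneg_left (hMnorm k x) (abs_nonneg _)
  have hrad : p.radius = ⊤ := by
    apply p.radius_eq_top_of_summable_norm
    intro r
    refine Summable.of_nonneg_of_le (fun k => by positivity) (fun k => ?_)
      (key_summable g hg C hbd r r.coe_nonneg)
    have heq : ∫ x, |g x| * ((r : ℝ) * ‖x‖) ^ k / k ! =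
        ((k ! : ℝ)⁻¹ * (r : ℝ) ^ k) * ∫ x, |g x| * ‖x‖ ^ k := by
      rw [← integral_const_mul]
      refine integral_congr_ae (Filter.Eventually.of_forall fun x => ?_)
      simp only [mul_pow]
      have hk : (k ! : ℝ) ≠ 0 := Nat.cast_ne_zero.mpr (Nat.factorial_ne_zero k)
      field_simp
    rw [heq]
    calc ‖p k‖ * (r : ℝ) ^ k ≤ ((k ! : ℝ)⁻¹ * ∫ x, |g x| * ‖x‖ ^ k) * (r : ℝ) ^ k :=
          mul_le_mul_of_nonneg_right (hpk_norm k) (by positivity)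
      _ = ((k ! : ℝ)⁻¹ * (r : ℝ) ^ k) * ∫ x, |g x| * ‖x‖ ^ k := by ring
  have hps : HasFPowerSeriesOnBall
      (fun h : E => ∫ x, g x * Real.exp ((inner ℝ x h : ℝ))) p 0 ⊤ := by
    refine ⟨le_of_eq hrad.symm, ENNReal.zero_lt_top, ?_⟩
    intro y _
    have hpk_apply : ∀ k : ℕ, (p k fun _ => y) = ∫ x, g x * (inner ℝ x y : ℝ) ^ k / k ! := by
      intro k
      have h1 : (∫ x, g x • M k x) (fun _ => y) = ∫ x, (g x • M k x) (fun _ => y) :=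
        ContinuousMultilinearMap.integral_apply (hInt k) _
      have h2 : ∀ x : E, (g x • M k x) (fun _ => y) = g x * (inner ℝ x y : ℝ) ^ k := by
        intro x
        rw [ContinuousMultilinearMap.smul_apply, hMapply]
        simp [smul_eq_mul, Finset.prod_const]
      calc (p k fun _ => y) = (k ! : ℝ)⁻¹ * ((∫ x, g x • M k x) (fun _ => y)) := by
            simp [hp]
        _ = (k ! : ℝ)⁻¹ * ∫ x, g x * (inner ℝ x y : ℝ) ^ k := by
            rw [h1]
            congr 1
            exact integral_congr_ae (Filter.Eventually.of_forall fun x => h2 x)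
        _ = ∫ x, g x * (inner ℝ x y : ℝ) ^ k / k ! := by
            rw [← integral_const_mul]
            refine integral_congr_ae (Filter.Eventually.of_forall fun x => ?_)
            ring
    set F : ℕ → E → ℝ := fun k x => g x * (inner ℝ x y : ℝ) ^ k / k ! with hF
    have hFbd : ∀ (k : ℕ) (x : E), ‖F k x‖ ≤ |g x| * (‖y‖ * ‖x‖) ^ k / k ! := by
      intro k x
      have h1 : |(inner ℝ x y : ℝ)| ≤ ‖y‖ * ‖x‖ := by
        rw [real_inner_comm]
        exact abs_real_inner_le_norm y x
      simp only [hF, Real.norm_eq_abs, abs_div, abs_mul, abs_pow, Nat.abs_cast]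
      have hk : (0:ℝ) < k ! := by positivity
      have h2 : |(inner ℝ x y : ℝ)| ^ k ≤ (‖y‖ * ‖x‖) ^ k :=
        pow_le_pow_left₀ (abs_nonneg _) h1 k
      have h3 := mul_le_mul_of_nonneg_left h2 (abs_nonneg (g x))
      exact (div_le_div_iff_of_pos_right hk).mpr h3
    have hFmeas : ∀ k : ℕ, AEStronglyMeasurable (F k) volume := by
      intro k
      have hin : Measurable fun x : E => (inner ℝ x y : ℝ) :=
        (continuous_id.inner continuous_const).measurable
      exact ((hg.mul (hin.pow_const k)).div_const _).aestronglyMeasurable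
    have hFint : ∀ k : ℕ, Integrable (F k) := fun k =>
      (key_integrable g hg C hbd ‖y‖ (norm_nonneg y) k).mono' (hFmeas k)
        (Filter.Eventually.of_forall fun x => hFbd k x)
    have hFsum : Summable fun k : ℕ => ∫ x, ‖F k x‖ := by
      refine Summable.of_nonneg_of_le (fun k => integral_nonneg fun x => norm_nonneg _)
        (fun k => ?_) (key_summable g hg C hbd ‖y‖ (norm_nonneg y))
      refine integral_mono (hFint k).norm
        (key_integrable g hg C hbd ‖y‖ (norm_nonneg y) k) fun x => hFbd k x
    have hsum := hasSum_integral_of_summable_integral_norm hFint hFsum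
    have htsum : (fun x : E => ∑' k, F k x) = fun x => g x * Real.exp ((inner ℝ x y : ℝ)) := by
      funext x
      have heq : (fun k : ℕ => F k x) = fun k : ℕ => g x * ((inner ℝ x y : ℝ) ^ k / k !) := by
        funext k
        simp only [hF]
        ring
      rw [heq, tsum_mul_left, tsum_pow_div_factorial]
    have hfun : (fun k : ℕ => (p k fun _ => y)) = fun k : ℕ => ∫ x, F k x := by
      funext k
      rw [hpk_apply k]
    rw [hfun]
    simp only [zero_add]
    rw [← htsum]
    exact hsum
  intro h _
  exact hps.analyticOnNhd h (EMetric.mem_ball.mpr (edist_lt_top _ _))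

end GaussianConvAux

end GaussianConvAux

open GaussianConvAux in
/-- The convolution of a bounded measurable function with the standard Gaussian
measure on `ℝ^n` is real-analytic. -/
theorem analytic_gaussian_convolution
    (n : ℕ)
    (μ : Measure (EuclideanSpace ℝ (Fin n)))
    (hμ : μ = (volume : Measure (EuclideanSpace ℝ (Fin n))).withDensity
        (fun x => ENNReal.ofReal ((2 * Real.pi) ^ (-(n : ℝ) / 2) *
          Real.exp (-‖x‖ ^ 2 / 2))))
    (f : EuclideanSpace ℝ (Fin n) → ℝ)
    (hf : Measurable f) (C : ℝ) (hbd : ∀ x, |f x| ≤ C) :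
    AnalyticOnNhd ℝ (fun h => ∫ w, f (w + h) ∂μ) Set.univ := by
  have hexpmeas : Measurable fun x : EuclideanSpace ℝ (Fin n) => Real.exp (-‖x‖ ^ 2 / 2) :=
    Real.measurable_exp.comp ((measurable_norm.pow_const 2).neg.div_const 2)
  set c : ℝ := (2 * Real.pi) ^ (-(n : ℝ) / 2) with hc
  have hcpos : 0 < c := Real.rpow_pos_of_pos (by positivity) _
  set ρ : EuclideanSpace ℝ (Fin n) → ℝ := fun x => c * Real.exp (-‖x‖ ^ 2 / 2) with hρ
  have hρmeas : Measurable ρ := hexpmeas.const_mul c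
  have hρnonneg : ∀ x, 0 ≤ ρ x := fun x => by
    simp only [hρ]; positivity
  set g : EuclideanSpace ℝ (Fin n) → ℝ := fun x => f x * Real.exp (-‖x‖ ^ 2 / 2) with hg'
  have hgmeas : Measurable g := hf.mul hexpmeas
  have hgbd : ∀ x, |g x| ≤ C * Real.exp (-‖x‖ ^ 2 / 2) := by
    intro x
    simp only [hg']
    rw [abs_mul, abs_of_nonneg (Real.exp_nonneg _)]
    exact mul_le_mul_of_nonneg_right (hbd x) (Real.exp_nonneg _)
  have hkey : ∀ h : EuclideanSpace ℝ (Fin n),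
      ∫ w, f (w + h) ∂μ =
        (c * Real.exp (-‖h‖ ^ 2 / 2)) * ∫ x, g x * Real.exp ((inner ℝ x h : ℝ)) := by
    intro h
    have h1 : μ = (volume : Measure (EuclideanSpace ℝ (Fin n))).withDensity
        (fun x => ((Real.toNNReal (ρ x) : ℝ≥0) : ℝ≥0∞)) := by
      rw [hμ]
      rfl
    rw [h1, integral_withDensity_eq_integral_smul (hρmeas.real_toNNReal) _]
    have h3 : ∫ w, Real.toNNReal (ρ w) • f (w + h) = ∫ w, ρ w * f (w + h) :=
      integral_congr_ae (Filter.Eventually.of_forall fun w => by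
        show (ρ w).toNNReal • f (w + h) = ρ w * f (w + h)
        rw [NNReal.smul_def, Real.coe_toNNReal _ (hρnonneg w), smul_eq_mul])
    rw [h3]
    have h4 : ∫ w, ρ w * f (w + h) = ∫ x, ρ (x - h) * f x := by
      have ht := integral_sub_right_eq_self (μ := volume)
        (fun w => ρ w * f (w + h)) h
      rw [← ht]
      refine integral_congr_ae (Filter.Eventually.of_forall fun x => ?_)
      simp only [sub_add_cancel]
    rw [h4]
    have h5 : ∀ x : EuclideanSpace ℝ (Fin n), ρ (x - h) * f x =
        (c * Real.exp (-‖h‖ ^ 2 / 2)) * (g x * Real.exp ((inner ℝ x h : ℝ))) := by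
      intro x
      have hnorm : ‖x - h‖ ^ 2 = ‖x‖ ^ 2 - 2 * (inner ℝ x h : ℝ) + ‖h‖ ^ 2 :=
        norm_sub_sq_real x h
      have hexp : Real.exp (-‖x - h‖ ^ 2 / 2)
          = Real.exp (-‖h‖ ^ 2 / 2) * (Real.exp (-‖x‖ ^ 2 / 2) *
            Real.exp ((inner ℝ x h : ℝ))) := by
        rw [← Real.exp_add, ← Real.exp_add, hnorm]
        congr 1
        ring
      simp only [hρ, hg']
      rw [hexp]
      ring
    have h6 : ∫ x, ρ (x - h) * f x
        = ∫ x, (c * Real.exp (-‖h‖ ^ 2 / 2)) * (g x * Real.exp ((inner ℝ x h : ℝ))) :=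
      integral_congr_ae (Filter.Eventually.of_forall fun x => h5 x)
    rw [h6, integral_const_mul]
  have heqfun : (fun h => ∫ w, f (w + h) ∂μ)
      = fun h : EuclideanSpace ℝ (Fin n) =>
        (c * Real.exp (-‖h‖ ^ 2 / 2)) * ∫ x, g x * Real.exp ((inner ℝ x h : ℝ)) :=
    funext hkey
  rw [heqfun]
  have hA2 := analyticOnNhd_integral_exp_inner g hgmeas C hgbd
  have hA1 : AnalyticOnNhd ℝ (fun h : EuclideanSpace ℝ (Fin n) =>
      c * Real.exp (-‖h‖ ^ 2 / 2)) Set.univ := by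
    have hq : AnalyticOnNhd ℝ (fun h : EuclideanSpace ℝ (Fin n) =>
        -(1/2 : ℝ) * ∑ i, h i * h i) Set.univ := by
      apply AnalyticOnNhd.mul analyticOnNhd_const
      refine Finset.analyticOnNhd_fun_sum _ fun i _ => ?_
      have hproj : AnalyticOnNhd ℝ (fun x : EuclideanSpace ℝ (Fin n) => x i) Set.univ :=
        (EuclideanSpace.proj (𝕜 := ℝ) i).analyticOnNhd Set.univ
      exact hproj.mul hproj
    have hexpq := analyticOnNhd_rexp.comp hq (Set.mapsTo_univ _ _)
    have heq2 : (fun h : EuclideanSpace ℝ (Fin n) => c * Real.exp (-‖h‖ ^ 2 / 2))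
        = fun h => c * Real.exp (-(1/2 : ℝ) * ∑ i, h i * h i) := by
      funext h
      have hn2 : ‖h‖ ^ 2 = ∑ i, h i * h i := by
        rw [← real_inner_self_eq_norm_sq]
        simp only [PiLp.inner_apply, RCLike.inner_apply, conj_trivial]
      have hn3 : -‖h‖ ^ 2 / 2 = -(1/2 : ℝ) * ∑ i, h i * h i := by
        rw [hn2]; ring
      rw [hn3]
    rw [heq2]
    exact analyticOnNhd_const.mul hexpq
  exact hA1.mul hA2
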